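/- Let Ω ⊂ ℝ^N be open and bounded, Γ = {x ∉ Ω : dist(x,Ω) < ε₀}, X = Ω ∪ Γ, and fix 0 < ε ≤ ε₀. Let α ∈ [0,1), β = 1 − α, and let F : Γ → ℝ and Ψ : ℝ^N → ℝ be bounded Borel functions with Ψ ≤ F on Γ. Define the operator T on bounded Borel functions v : X → ℝ by (Tv)(x) = max{Ψ(x), (α/2) sup_{B_ε(x)} v + (α/2) inf_{B_ε(x)} v + β ⨍_{B_ε(x)} v} for x ∈ Ω and (Tv)(x) = v(x) for x ∈ Γ. With u₀ = F·χ_Γ + (inf_X Ψ)·χ_Ω, the iterates u_{n+1} = T u_n form a nondecreasing sequence of bounded Borel functions on X. -/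

import Mathlib

open MeasureTheory Metric Set Classical

/-- The obstacle dynamic programming operator. -/
noncomputable def dppT {N : ℕ} (Ω : Set (EuclideanSpace ℝ (Fin N)))
    (Ψ : EuclideanSpace ℝ (Fin N) → ℝ) (α β ε : ℝ)
    (v : EuclideanSpace ℝ (Fin N) → ℝ) : EuclideanSpace ℝ (Fin N) → ℝ :=
  fun x => if x ∈ Ω then
      max (Ψ x) (α / 2 * sSup (v '' ball x ε) + α / 2 * sInf (v '' ball x ε)
        + β * ⨍ y in ball x ε, v y)
    else v x

section Aux

variable {N : ℕ}

local notation "E" => EuclideanSpace ℝ (Fin N)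

lemma aux_bddAbove {ε C : ℝ} {v : E → ℝ} (hvb : ∀ x, |v x| ≤ C) (x : E) :
    BddAbove (v '' ball x ε) := by
  refine ⟨C, ?_⟩
  rintro a ⟨w, -, rfl⟩
  exact (abs_le.1 (hvb w)).2

lemma aux_bddBelow {ε C : ℝ} {v : E → ℝ} (hvb : ∀ x, |v x| ≤ C) (x : E) :
    BddBelow (v '' ball x ε) := by
  refine ⟨-C, ?_⟩
  rintro a ⟨w, -, rfl⟩
  exact (abs_le.1 (hvb w)).1

lemma aux_ball_nonempty {ε : ℝ} (hε : 0 < ε) (v : E → ℝ) (x : E) :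
    (v '' ball x ε).Nonempty :=
  ⟨v x, mem_image_of_mem v (mem_ball_self hε)⟩

lemma aux_measSup {ε C : ℝ} (hε : 0 < ε) {v : E → ℝ} (hvb : ∀ x, |v x| ≤ C) :
    Measurable fun x : E => sSup (v '' ball x ε) := by
  apply LowerSemicontinuous.measurable
  intro x t ht
  obtain ⟨a, ⟨y, hy, rfl⟩, hta⟩ := exists_lt_of_lt_csSup (aux_ball_nonempty hε v x) ht
  have hxy : x ∈ ball y ε := by rw [mem_ball, dist_comm]; exact hy
  filter_upwards [isOpen_ball.mem_nhds hxy] with z hz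
  have hyz : y ∈ ball z ε := by rw [mem_ball, dist_comm]; exact hz
  exact lt_of_lt_of_le hta (le_csSup (aux_bddAbove hvb z) (mem_image_of_mem v hyz))

lemma aux_measInf {ε C : ℝ} (hε : 0 < ε) {v : E → ℝ} (hvb : ∀ x, |v x| ≤ C) :
    Measurable fun x : E => sInf (v '' ball x ε) := by
  apply UpperSemicontinuous.measurable
  intro x t ht
  obtain ⟨a, ⟨y, hy, rfl⟩, hta⟩ := exists_lt_of_csInf_lt (aux_ball_nonempty hε v x) ht
  have hxy : x ∈ ball y ε := by rw [mem_ball, dist_comm]; exact hy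
  filter_upwards [isOpen_ball.mem_nhds hxy] with z hz
  have hyz : y ∈ ball z ε := by rw [mem_ball, dist_comm]; exact hz
  exact lt_of_le_of_lt (csInf_le (aux_bddBelow hvb z) (mem_image_of_mem v hyz)) hta

lemma aux_measInt (ε : ℝ) {v : E → ℝ} (hv : Measurable v) :
    Measurable fun x : E => ∫ y in ball x ε, v y := by
  have hs : MeasurableSet {p : E × E | dist p.2 p.1 < ε} :=
    measurableSet_lt (measurable_snd.dist measurable_fst) measurable_const
  have hf : Measurable fun p : E × E => if dist p.2 p.1 < ε then v p.2 else 0 :=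
    Measurable.ite hs (hv.comp measurable_snd) measurable_const
  have h2 := (hf.stronglyMeasurable.integral_prod_right' (ν := volume)).measurable
  have he : (fun x : E => ∫ y in ball x ε, v y)
      = fun x : E => ∫ y, (if dist y x < ε then v y else 0) := by
    funext x
    rw [← integral_indicator measurableSet_ball]
    congr 1
  exact he ▸ h2

lemma aux_measAvg {ε : ℝ} {v : E → ℝ} (hv : Measurable v) :
    Measurable fun x : E => ⨍ y in ball x ε, v y := by
  simp_rw [setAverage_eq, Measure.real, Measure.addHaar_ball_center volume]
  exact Measurable.const_smul (aux_measInt ε hv) ((volume (ball (0 : EuclideanSpace ℝ (Fin N)) ε)).toReal⁻¹)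

lemma aux_integrableOn {ε C : ℝ} {v : E → ℝ} (hv : Measurable v) (hvb : ∀ x, |v x| ≤ C)
    (x : E) : IntegrableOn v (ball x ε) volume := by
  refine Integrable.mono' (g := fun _ => C)
    (integrableOn_const measure_ball_lt_top.ne)
    (hv.aestronglyMeasurable.restrict) ?_
  filter_upwards with y
  simpa [Real.norm_eq_abs] using hvb y

lemma aux_avg_abs_le {ε C : ℝ} (hε : 0 < ε) {v : E → ℝ} (hv : Measurable v)
    (hvb : ∀ x, |v x| ≤ C) (x : E) : |⨍ y in ball x ε, v y| ≤ C := by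
  have htR : 0 < (volume (ball x ε)).toReal :=
    ENNReal.toReal_pos (measure_ball_pos volume x hε).ne' measure_ball_lt_top.ne
  have h1 : ‖∫ y in ball x ε, v y‖ ≤ C * (volume (ball x ε)).toReal :=
    norm_setIntegral_le_of_norm_le_const measure_ball_lt_top
      (fun y _ => by simpa [Real.norm_eq_abs] using hvb y)
  rw [setAverage_eq, smul_eq_mul, abs_mul, abs_of_nonneg (inv_nonneg.2 (show (0:ℝ) ≤ volume.real (ball x ε) from htR.le))]
  calc (volume (ball x ε)).toReal⁻¹ * |∫ y in ball x ε, v y|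
      ≤ (volume (ball x ε)).toReal⁻¹ * (C * (volume (ball x ε)).toReal) := by
        exact mul_le_mul_of_nonneg_left (by simpa [Real.norm_eq_abs] using h1)
          (inv_nonneg.2 htR.le)
    _ = C := by field_simp

lemma aux_combo_abs_le {ε C α : ℝ} (hε : 0 < ε) (hα0 : 0 ≤ α) (hα1 : α ≤ 1)
    {v : E → ℝ} (hv : Measurable v) (hvb : ∀ x, |v x| ≤ C) (x : E) :
    |α / 2 * sSup (v '' ball x ε) + α / 2 * sInf (v '' ball x ε)
      + (1 - α) * ⨍ y in ball x ε, v y| ≤ C := by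
  have hne := aux_ball_nonempty hε v x
  have hSC : sSup (v '' ball x ε) ≤ C := by
    apply csSup_le hne
    rintro a ⟨w, -, rfl⟩
    exact (abs_le.1 (hvb w)).2
  have hSc : -C ≤ sSup (v '' ball x ε) :=
    le_trans (abs_le.1 (hvb x)).1 (le_csSup (aux_bddAbove hvb x)
      (mem_image_of_mem v (mem_ball_self hε)))
  have hIC : sInf (v '' ball x ε) ≤ C :=
    le_trans (csInf_le (aux_bddBelow hvb x)
      (mem_image_of_mem v (mem_ball_self hε))) (abs_le.1 (hvb x)).2
  have hIc : -C ≤ sInf (v '' ball x ε) := by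
    apply le_csInf hne
    rintro a ⟨w, -, rfl⟩
    exact (abs_le.1 (hvb w)).1
  have hA := abs_le.1 (aux_avg_abs_le hε hv hvb x)
  rw [abs_le]
  constructor <;> nlinarith [hA.1, hA.2]

end Aux

/-- The Perron iterates of the obstacle DPP operator form a nondecreasing
sequence of bounded Borel functions on `X`. -/
theorem dpp_iterates_monotone {N : ℕ} (Ω : Set (EuclideanSpace ℝ (Fin N)))
    (hΩo : IsOpen Ω) (hΩb : Bornology.IsBounded Ω)
    (ε₀ ε α : ℝ) (hε₀ : 0 < ε₀) (hε : 0 < ε) (hεε₀ : ε ≤ ε₀)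
    (hα : α ∈ Set.Ico (0:ℝ) 1)
    (Γ : Set (EuclideanSpace ℝ (Fin N)))
    (hΓ : Γ = {x | x ∉ Ω ∧ Metric.infDist x Ω < ε₀})
    (X : Set (EuclideanSpace ℝ (Fin N))) (hX : X = Ω ∪ Γ)
    (F Ψ : EuclideanSpace ℝ (Fin N) → ℝ) (hF : Measurable F) (hΨ : Measurable Ψ)
    (CF CΨ : ℝ) (hFb : ∀ x, |F x| ≤ CF) (hΨb : ∀ x, |Ψ x| ≤ CΨ)
    (hΨF : ∀ x ∈ Γ, Ψ x ≤ F x)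
    (u : ℕ → EuclideanSpace ℝ (Fin N) → ℝ)
    (hu0 : ∀ x, u 0 x = if x ∈ Γ then F x else sInf (Ψ '' X))
    (huS : ∀ n, u (n + 1) = dppT Ω Ψ α (1 - α) ε (u n)) :
    (∀ n, Measurable (u n) ∧ ∃ C, ∀ x ∈ X, |u n x| ≤ C) ∧
    (∀ n, ∀ x ∈ X, u n x ≤ u (n + 1) x) := by
  obtain ⟨hα0, hα1⟩ := hα
  set c : ℝ := sInf (Ψ '' X) with hc
  set C : ℝ := max CΨ (max CF |c|) with hC
  have hCFC : CF ≤ C := le_trans (le_max_left _ _) (le_max_right _ _)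
  have hcC : |c| ≤ C := le_trans (le_max_right _ _) (le_max_right _ _)
  have hΨC : CΨ ≤ C := le_max_left _ _
  have hΓm : MeasurableSet Γ := by
    rw [hΓ]
    have : {x : EuclideanSpace ℝ (Fin N) | x ∉ Ω ∧ Metric.infDist x Ω < ε₀}
        = Ωᶜ ∩ {x | Metric.infDist x Ω < ε₀} := rfl
    rw [this]
    exact hΩo.measurableSet.compl.inter
      (measurableSet_lt (continuous_infDist_pt Ω).measurable measurable_const)
  have hu0eq : u 0 = fun x => if x ∈ Γ then F x else c := funext hu0
  -- key: measurability and global boundedness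
  have key : ∀ n, Measurable (u n) ∧ ∀ x, |u n x| ≤ C := by
    intro n
    induction n with
    | zero =>
      constructor
      · rw [hu0eq]; exact Measurable.ite hΓm hF measurable_const
      · intro x
        rw [hu0 x]
        split
        · exact (hFb x).trans hCFC
        · exact hcC
    | succ n ih =>
      obtain ⟨ihm, ihb⟩ := ih
      constructor
      · rw [huS n]
        unfold dppT
        refine Measurable.ite hΩo.measurableSet ?_ ihm
        refine hΨ.max ?_
        exact (((aux_measSup hε ihb).const_mul _).add
          ((aux_measInf hε ihb).const_mul _)).add ((aux_measAvg ihm).const_mul _)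
      · intro x
        rw [huS n]
        unfold dppT
        split
        · rw [abs_le]
          have hcombo := abs_le.1 (aux_combo_abs_le hε hα0 hα1.le ihm ihb x)
          have hΨx := abs_le.1 (hΨb x)
          constructor
          · refine le_trans ?_ (le_max_right _ _)
            linarith [hcombo.1]
          · exact max_le (hΨx.2.trans hΨC) hcombo.2
        · exact ihb x
  have hballX : ∀ x ∈ Ω, ∀ y ∈ ball x ε, y ∈ X := by
    intro x hx y hy
    rw [hX]
    by_cases hyΩ : y ∈ Ω
    · exact Or.inl hyΩ
    · refine Or.inr ?_
      rw [hΓ]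
      refine ⟨hyΩ, ?_⟩
      calc Metric.infDist y Ω ≤ dist y x := Metric.infDist_le_dist_of_mem hx
        _ < ε := hy
        _ ≤ ε₀ := hεε₀
  -- monotonicity
  have mono : ∀ n, ∀ x ∈ X, u n x ≤ u (n + 1) x := by
    intro n
    induction n with
    | zero =>
      intro x hx
      rw [huS 0]
      unfold dppT
      split
      case isTrue hxΩ =>
        have hxΓ : x ∉ Γ := by rw [hΓ]; intro h; exact h.1 hxΩ
        rw [hu0 x, if_neg hxΓ]
        refine le_trans ?_ (le_max_left _ _)
        exact csInf_le ⟨-CΨ, by rintro a ⟨w, -, rfl⟩; exact (abs_le.1 (hΨb w)).1⟩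
          (mem_image_of_mem Ψ hx)
      case isFalse hxΩ => exact le_refl _
    | succ n ih =>
      intro x hx
      rw [huS n, huS (n + 1)]
      unfold dppT
      split
      case isTrue hxΩ =>
        refine max_le_max (le_refl (Ψ x)) ?_
        have hn := key n
        have hn1 := key (n + 1)
        have hle : ∀ y ∈ ball x ε, u n y ≤ u (n + 1) y :=
          fun y hy => ih y (hballX x hxΩ y hy)
        have hne := aux_ball_nonempty hε (u n) x
        have hne' := aux_ball_nonempty hε (u (n + 1)) x
        have hS : sSup (u n '' ball x ε) ≤ sSup (u (n + 1) '' ball x ε) := by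
          apply csSup_le hne
          rintro a ⟨y, hy, rfl⟩
          exact (hle y hy).trans (le_csSup (aux_bddAbove hn1.2 x)
            (mem_image_of_mem _ hy))
        have hI : sInf (u n '' ball x ε) ≤ sInf (u (n + 1) '' ball x ε) := by
          apply le_csInf hne'
          rintro a ⟨y, hy, rfl⟩
          exact (csInf_le (aux_bddBelow hn.2 x) (mem_image_of_mem _ hy)).trans
            (hle y hy)
        have hA : (⨍ y in ball x ε, u n y) ≤ ⨍ y in ball x ε, u (n + 1) y := by
          rw [setAverage_eq, setAverage_eq, smul_eq_mul, smul_eq_mul]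
          refine mul_le_mul_of_nonneg_left ?_ (inv_nonneg.2 ENNReal.toReal_nonneg)
          exact setIntegral_mono_on (aux_integrableOn hn.1 hn.2 x)
            (aux_integrableOn hn1.1 hn1.2 x) measurableSet_ball hle
        have h2 : 0 ≤ α / 2 := by linarith
        have h3 : 0 ≤ 1 - α := by linarith
        exact add_le_add (add_le_add (mul_le_mul_of_nonneg_left hS h2)
          (mul_le_mul_of_nonneg_left hI h2)) (mul_le_mul_of_nonneg_left hA h3)
      case isFalse hxΩ => exact ih x hx
  exact ⟨fun n => ⟨(key n).1, ⟨C, fun x _ => (key n).2 x⟩⟩, mono⟩
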